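/- (Existence of dual prices / strong LP duality.) Let c ∈ ℝⁿ and suppose P = {z ∈ ℝⁿ : Az ≤ b} is nonempty and compact, and let v be a minimizer of z ↦ c·z over P. Then there exists λ ∈ ℝ^m with λ ≥ 0, c = −λᵀA, and c·v = −λ·b. -/

import Mathlib

open scoped RealInnerProductSpace BigOperators

variable {H : Type*} [NormedAddCommGroup H] [InnerProductSpace ℝ H] [FiniteDimensional ℝ H]

/-- The cone generated by a linearly independent finite family restricted to `t` is closed. -/
lemma aux_closed_indep {ι : Type*} [Fintype ι] [DecidableEq ι] (v : ι → H) (t : Finset ι)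
    (hind : LinearIndependent ℝ (fun i : t => v i)) :
    IsClosed {x : H | ∃ l : ι → ℝ, (∀ i, 0 ≤ l i) ∧ (∀ i ∉ t, l i = 0) ∧ ∑ i, l i • v i = x} := by
  set f : (t → ℝ) →ₗ[ℝ] H := Fintype.linearCombination ℝ (fun i : t => v i) with hf
  have hinj : Function.Injective f := by
    rw [← LinearMap.ker_eq_bot, LinearMap.ker_eq_bot']
    intro g hg
    have := Fintype.linearIndependent_iff.mp hind g (by
      simpa [hf, Fintype.linearCombination_apply] using hg)
    funext i; exact this i
  have hemb := LinearMap.isClosedEmbedding_of_injective (LinearMap.ker_eq_bot.mpr hinj)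
  have hset : {x : H | ∃ l : ι → ℝ, (∀ i, 0 ≤ l i) ∧ (∀ i ∉ t, l i = 0) ∧ ∑ i, l i • v i = x}
      = f '' {g : t → ℝ | ∀ i, 0 ≤ g i} := by
    ext x
    constructor
    · rintro ⟨l, hl0, hlt, rfl⟩
      refine ⟨fun i => l i, fun i => hl0 i, ?_⟩
      rw [hf, Fintype.linearCombination_apply]
      have h1 : ∑ i : t, l i • v i = ∑ i ∈ t, l i • v i :=
        Finset.sum_coe_sort t (fun i => l i • v i)
      rw [h1]
      exact (Finset.sum_subset t.subset_univ (fun i _ hi => by rw [hlt i hi, zero_smul]))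
    · rintro ⟨g, hg, rfl⟩
      classical
      refine ⟨fun i => if h : i ∈ t then g ⟨i, h⟩ else 0, ?_, ?_, ?_⟩
      · intro i; by_cases h : i ∈ t
        · simpa [h] using hg ⟨i, h⟩
        · simp [h]
      · intro i hi; simp [hi]
      · rw [hf, Fintype.linearCombination_apply]
        have h1 : ∑ i : t, (if h : (i:ι) ∈ t then g ⟨i, h⟩ else 0) • v i
            = ∑ i ∈ t, (if h : i ∈ t then g ⟨i, h⟩ else 0) • v i :=
          Finset.sum_coe_sort t (fun i => (if h : i ∈ t then g ⟨i, h⟩ else 0) • v i)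
        rw [← Finset.sum_subset t.subset_univ (fun i _ hi => by simp [hi]), ← h1]
        apply Finset.sum_congr rfl
        intro i _
        simp
  rw [hset]
  apply hemb.isClosedMap
  have : {g : t → ℝ | ∀ i, 0 ≤ g i} = Set.pi Set.univ (fun _ => Set.Ici (0:ℝ)) := by
    ext g
    constructor
    · intro hg i _; exact hg i
    · intro hg i; exact hg i trivial
  rw [this]
  exact isClosed_set_pi (fun i _ => isClosed_Ici)

set_option linter.unusedSectionVars false in
/-- Conic Carathéodory: any nonnegative combination is a nonnegative combination supported
on a set of linearly independent vectors. -/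
lemma aux_caratheodory {ι : Type*} [Fintype ι] [DecidableEq ι] (v : ι → H) :
    ∀ N : ℕ, ∀ l : ι → ℝ, (∀ i, 0 ≤ l i) →
      (Finset.univ.filter fun i => l i ≠ 0).card ≤ N →
      ∃ (t : Finset ι) (μ : ι → ℝ), LinearIndependent ℝ (fun i : t => v i) ∧
        (∀ i, 0 ≤ μ i) ∧ (∀ i ∉ t, μ i = 0) ∧ ∑ i, μ i • v i = ∑ i, l i • v i := by
  intro N
  induction N with
  | zero =>
    intro l hl hcard
    have hz : ∀ i, l i = 0 := by
      intro i
      by_contra hne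
      have : i ∈ Finset.univ.filter fun i => l i ≠ 0 := by simp [hne]
      have := Finset.card_pos.mpr ⟨i, this⟩
      omega
    refine ⟨∅, l, ?_, hl, fun i _ => hz i, rfl⟩
    have : IsEmpty ((∅ : Finset ι) : Type _) := by
      constructor; rintro ⟨i, hi⟩; simp at hi
    exact linearIndependent_empty_type
  | succ N ih =>
    intro l hl hcard
    set s : Finset ι := Finset.univ.filter fun i => l i ≠ 0 with hs
    by_cases hind : LinearIndependent ℝ (fun i : s => v i)
    · refine ⟨s, l, hind, hl, ?_, rfl⟩
      intro i hi
      by_contra hne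
      exact hi (by simp [hs, hne])
    · -- get a dependency supported on s
      rw [Fintype.linearIndependent_iff] at hind
      push_neg at hind
      obtain ⟨g, hgsum, j, hgj⟩ := hind
      -- produce G : ι → ℝ with sum zero, supported on s, and positive somewhere
      have key : ∀ g : s → ℝ, (∑ i : s, g i • v i = 0) → ∀ j : s, 0 < g j →
          ∃ (t : Finset ι) (μ : ι → ℝ), LinearIndependent ℝ (fun i : t => v i) ∧
            (∀ i, 0 ≤ μ i) ∧ (∀ i ∉ t, μ i = 0) ∧ ∑ i, μ i • v i = ∑ i, l i • v i := by
        intro g hgsum j hgj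
        set G : ι → ℝ := fun i => if h : i ∈ s then g ⟨i, h⟩ else 0 with hG
        have hGsum : ∑ i, G i • v i = 0 := by
          have h1 : ∑ i : s, G i • v i = ∑ i ∈ s, G i • v i :=
            Finset.sum_coe_sort s (fun i => G i • v i)
          rw [← Finset.sum_subset s.subset_univ (fun i _ hi => by simp [hG, hi]), ← h1, ← hgsum]
          apply Finset.sum_congr rfl
          intro i _; simp [hG]
        have hGoff : ∀ i ∉ s, G i = 0 := fun i hi => by simp [hG, hi]
        set T : Finset ι := s.filter (fun i => 0 < G i) with hT
        have hjT : (j : ι) ∈ T := by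
          simp only [hT, Finset.mem_filter]
          exact ⟨j.2, by simpa [hG, j.2] using hgj⟩
        have hTne : T.Nonempty := ⟨j, hjT⟩
        obtain ⟨i₀, hi₀T, hi₀min⟩ := Finset.exists_mem_eq_inf' hTne (fun i => l i / G i)
        set r : ℝ := T.inf' hTne (fun i => l i / G i) with hr
        have hi₀G : 0 < G i₀ := (Finset.mem_filter.mp hi₀T).2
        have hi₀s : i₀ ∈ s := (Finset.mem_filter.mp hi₀T).1
        have hr0 : 0 ≤ r := by
          rw [hr]
          apply Finset.le_inf'
          intro i hiT
          exact div_nonneg (hl i) (le_of_lt (Finset.mem_filter.mp hiT).2)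
        set μ : ι → ℝ := fun i => l i - r * G i with hμ
        have hμ0 : ∀ i, 0 ≤ μ i := by
          intro i
          by_cases hGi : 0 < G i
          · have hiT : i ∈ T := by
              refine Finset.mem_filter.mpr ⟨?_, hGi⟩
              by_contra hi
              rw [hGoff i hi] at hGi; exact lt_irrefl 0 hGi
            have : r ≤ l i / G i := Finset.inf'_le _ hiT
            have := (le_div_iff₀ hGi).mp this
            simp only [hμ]; linarith
          · push_neg at hGi
            have : r * G i ≤ 0 := mul_nonpos_of_nonneg_of_nonpos hr0 hGi
            simp only [hμ]; linarith [hl i]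
        have hμi₀ : μ i₀ = 0 := by
          simp only [hμ, hi₀min]
          field_simp
          ring
        have hμsupp : (Finset.univ.filter fun i => μ i ≠ 0) ⊆ s.erase i₀ := by
          intro i hi
          simp only [Finset.mem_filter] at hi
          refine Finset.mem_erase.mpr ⟨?_, ?_⟩
          · rintro rfl; exact hi.2 hμi₀
          · by_contra his
            have hli : l i = 0 := by
              by_contra hne; exact his (by simp [hs, hne])
            exact hi.2 (by simp [hμ, hli, hGoff i his])
        have hcard' : (Finset.univ.filter fun i => μ i ≠ 0).card ≤ N := by
          have h1 := Finset.card_le_card hμsupp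
          have h2 : (s.erase i₀).card = s.card - 1 := Finset.card_erase_of_mem hi₀s
          have h3 : 0 < s.card := Finset.card_pos.mpr ⟨i₀, hi₀s⟩
          omega
        have hμsum : ∑ i, μ i • v i = ∑ i, l i • v i := by
          simp only [hμ, sub_smul, mul_smul, Finset.sum_sub_distrib]
          rw [← Finset.smul_sum, hGsum, smul_zero, sub_zero]
        obtain ⟨t, ν, h1, h2, h3, h4⟩ := ih μ hμ0 hcard'
        exact ⟨t, ν, h1, h2, h3, h4.trans hμsum⟩
      rcases lt_trichotomy (g j) 0 with hneg | hzero | hpos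
      · refine key (-g) ?_ j ?_
        · simp only [Pi.neg_apply, neg_smul]
          rw [Finset.sum_neg_distrib, hgsum, neg_zero]
        · simpa using hneg
      · exact absurd hzero hgj
      · exact key g hgsum j hpos

/-- A finitely generated cone is closed. -/
lemma aux_fg_cone_closed {ι : Type*} [Fintype ι] [DecidableEq ι] (v : ι → H) :

    IsClosed {x : H | ∃ l : ι → ℝ, (∀ i, 0 ≤ l i) ∧ ∑ i, l i • v i = x} := by
  classical
  have hunion : {x : H | ∃ l : ι → ℝ, (∀ i, 0 ≤ l i) ∧ ∑ i, l i • v i = x}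
      = ⋃ t ∈ Finset.univ.powerset.filter
          (fun t : Finset ι => LinearIndependent ℝ (fun i : t => v i)),
        {x : H | ∃ l : ι → ℝ, (∀ i, 0 ≤ l i) ∧ (∀ i ∉ t, l i = 0) ∧ ∑ i, l i • v i = x} := by
    ext x
    simp only [Set.mem_iUnion, Set.mem_setOf_eq, Finset.mem_filter, Finset.mem_powerset]
    constructor
    · rintro ⟨l, hl, rfl⟩
      obtain ⟨t, μ, h1, h2, h3, h4⟩ :=
        aux_caratheodory v (Finset.univ.filter fun i => l i ≠ 0).card l hl le_rfl
      exact ⟨t, ⟨t.subset_univ, h1⟩, μ, h2, h3, h4⟩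
    · rintro ⟨t, _, l, hl, _, rfl⟩
      exact ⟨l, hl, rfl⟩
  rw [hunion]
  apply Set.Finite.isClosed_biUnion (Finset.finite_toSet _)
  intro t ht
  simp only [Finset.coe_filter, Set.mem_setOf_eq] at ht
  exact aux_closed_indep v t ht.2

/-- Farkas' lemma. -/
lemma aux_farkas {ι : Type*} [Fintype ι] [DecidableEq ι] (v : ι → H) (c : H)
    (h : ∀ d : H, (∀ i, ⟪v i, d⟫ ≤ 0) → 0 ≤ ⟪c, d⟫) :
    ∃ l : ι → ℝ, (∀ i, 0 ≤ l i) ∧ -c = ∑ i, l i • v i := by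
  set C : Set H := {x : H | ∃ l : ι → ℝ, (∀ i, 0 ≤ l i) ∧ ∑ i, l i • v i = x} with hC
  set K : ConvexCone ℝ H :=
    { carrier := C
      smul_mem' := by
        rintro a ha x ⟨l, hl, rfl⟩
        refine ⟨fun i => a * l i, fun i => mul_nonneg (le_of_lt ha) (hl i), ?_⟩
        rw [Finset.smul_sum]
        apply Finset.sum_congr rfl
        intro i _; rw [smul_smul]
      add_mem' := by
        rintro x ⟨l, hl, rfl⟩ y ⟨l', hl', rfl⟩
        refine ⟨fun i => l i + l' i, fun i => add_nonneg (hl i) (hl' i), ?_⟩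
        rw [← Finset.sum_add_distrib]
        apply Finset.sum_congr rfl
        intro i _; rw [add_smul] } with hK
  have hmem : ∀ x, x ∈ K ↔ x ∈ C := fun x => Iff.rfl
  have hne : (K : Set H).Nonempty := ⟨0, ⟨fun _ => 0, fun i => le_rfl, by simp⟩⟩
  have hcl : IsClosed (K : Set H) := aux_fg_cone_closed v
  by_contra hnc
  have hncK : -c ∉ K := by
    intro hmemK
    obtain ⟨l, hl, hsum⟩ := hmemK
    exact hnc ⟨l, hl, hsum.symm⟩
  obtain ⟨y, hy1, hy2⟩ :=
    ProperCone.hyperplane_separation'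
      (⟨K.toPointedCone (ConvexCone.Pointed.of_nonempty_of_isClosed hne hcl), hcl⟩ :
        ProperCone ℝ H) hncK
  have hvi : ∀ i, v i ∈ K := by
    intro i
    refine ⟨fun i' => if i' = i then 1 else 0, fun i' => by positivity, ?_⟩
    simp [ite_smul]
  have hd : ∀ i, ⟪v i, -y⟫ ≤ 0 := by
    intro i
    rw [inner_neg_right]
    linarith [hy1 (v i) (hvi i)]
  have := h (-y) hd
  rw [inner_neg_right] at this
  rw [inner_neg_left] at hy2
  linarith

/-- Existence of dual prices / strong LP duality: If
`P = {z : Az ≤ b}` is nonempty and compact and `v` minimizes `z ↦ c·z` over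
`P`, then there is `λ ≥ 0` with `c = −λᵀA` and `c·v = −λ·b`. -/
theorem stmt_10 {n m : ℕ}
    (A : Matrix (Fin m) (Fin n) ℝ) (b : Fin m → ℝ)
    (P : Set (EuclideanSpace ℝ (Fin n)))
    (hP : P = {z : EuclideanSpace ℝ (Fin n) | ∀ i, (∑ j, A i j * z j) ≤ b i})
    (hPne : P.Nonempty) (hPcpt : IsCompact P)
    (c : EuclideanSpace ℝ (Fin n))
    (v : EuclideanSpace ℝ (Fin n)) (hv : v ∈ P)
    (hvmin : ∀ z ∈ P, ⟪c, v⟫ ≤ ⟪c, z⟫) :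
    ∃ lam : Fin m → ℝ, (∀ i, 0 ≤ lam i) ∧
      (∀ j, c j = -(∑ i, lam i * A i j)) ∧
      ⟪c, v⟫ = -(∑ i, lam i * b i) := by
  classical
  subst hP
  have hip : ∀ x z : EuclideanSpace ℝ (Fin n), ⟪x, z⟫ = ∑ j, x j * z j := by
    intro x z
    simp [PiLp.inner_apply, RCLike.inner_apply, conj_trivial]
    exact Finset.sum_congr rfl (fun _ _ => mul_comm _ _)
  set a : Fin m → EuclideanSpace ℝ (Fin n) :=
    fun i => (WithLp.equiv 2 (Fin n → ℝ)).symm (fun j => A i j) with ha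
  have haz : ∀ i z, ⟪a i, z⟫ = ∑ j, A i j * z j := by
    intro i z
    rw [hip]
    apply Finset.sum_congr rfl
    intro j _
    congr 1
  set act : Fin m → Prop := fun i => ∑ j, A i j * v j = b i with hact
  set a' : Fin m → EuclideanSpace ℝ (Fin n) := fun i => if act i then a i else 0 with ha'
  have ha'pos : ∀ i, act i → a' i = a i := fun i hi => if_pos hi
  have ha'neg : ∀ i, ¬ act i → a' i = 0 := fun i hi => if_neg hi
  have hvfeas : ∀ i, ∑ j, A i j * v j ≤ b i := hv
  have hfark : ∀ d : EuclideanSpace ℝ (Fin n), (∀ i, ⟪a' i, d⟫ ≤ 0) → 0 ≤ ⟪c, d⟫ := by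
    intro d hd
    have hgact : ∀ i, act i → ⟪a i, d⟫ ≤ 0 := by
      intro i hi
      have h := hd i
      rwa [ha'pos i hi] at h
    set tch : Fin m → ℝ :=
      fun i => if 0 < ⟪a i, d⟫ then (b i - ∑ j, A i j * v j) / ⟪a i, d⟫ else 1 with htch
    have htchpos : ∀ i, 0 < ⟪a i, d⟫ →
        tch i = (b i - ∑ j, A i j * v j) / ⟪a i, d⟫ := by
      intro i hgi; simp only [htch]; rw [if_pos hgi]
    have htchneg : ∀ i, ¬ (0 < ⟪a i, d⟫) → tch i = 1 := by
      intro i hgi; simp only [htch]; rw [if_neg hgi]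
    have hinact : ∀ i, 0 < ⟪a i, d⟫ → ∑ j, A i j * v j < b i := by
      intro i hgi
      have hiact : ¬ act i := fun hia => absurd hgi (not_lt.mpr (hgact i hia))
      exact lt_of_le_of_ne (hvfeas i) hiact
    set ts : Finset ℝ := insert (1 : ℝ) (Finset.univ.image tch) with hts
    have htsne : ts.Nonempty := ⟨1, Finset.mem_insert_self _ _⟩
    set t : ℝ := ts.min' htsne with ht
    have htpos : 0 < t := by
      rw [ht, Finset.lt_min'_iff]
      intro x hx
      rw [hts, Finset.mem_insert] at hx
      rcases hx with rfl | hx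
      · exact one_pos
      · obtain ⟨i, _, rfl⟩ := Finset.mem_image.mp hx
        show (0:ℝ) < tch i
        by_cases hgi : 0 < ⟪a i, d⟫
        · rw [htchpos i hgi]
          exact div_pos (by linarith [hinact i hgi]) hgi
        · rw [htchneg i hgi]; exact one_pos
    have hzmem : ∀ i, ∑ j, A i j * ((v + t • d) j) ≤ b i := by
      intro i
      have hcomp : ∀ j, (v + t • d) j = v j + t * d j := by
        intro j
        rw [PiLp.add_apply, PiLp.smul_apply, smul_eq_mul]
      have hsum : ∑ j, A i j * ((v + t • d) j) = (∑ j, A i j * v j) + t * ⟪a i, d⟫ := by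
        rw [haz, Finset.mul_sum, ← Finset.sum_add_distrib]
        apply Finset.sum_congr rfl
        intro j _
        rw [hcomp j]; ring
      rw [hsum]
      by_cases hgi : 0 < ⟪a i, d⟫
      · have htle : t ≤ tch i := by
          apply Finset.min'_le
          exact Finset.mem_insert_of_mem (Finset.mem_image_of_mem tch (Finset.mem_univ i))
        rw [htchpos i hgi] at htle
        have := (le_div_iff₀ hgi).mp htle
        linarith
      · push_neg at hgi
        have : t * ⟪a i, d⟫ ≤ 0 := mul_nonpos_of_nonneg_of_nonpos (le_of_lt htpos) hgi
        linarith [hvfeas i]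
    have := hvmin (v + t • d) hzmem
    rw [inner_add_right, real_inner_smul_right] at this
    nlinarith
  obtain ⟨l, hl0, hlsum⟩ := aux_farkas a' c hfark
  refine ⟨fun i => if act i then l i else 0, ?_, ?_, ?_⟩
  · intro i
    show (0:ℝ) ≤ if act i then l i else 0
    by_cases hi : act i
    · rw [if_pos hi]; exact hl0 i
    · rw [if_neg hi]
  · intro j
    have h1 : ⟪EuclideanSpace.single j (1:ℝ), -c⟫
        = ⟪EuclideanSpace.single j (1:ℝ), ∑ i, l i • a' i⟫ := by
      rw [hlsum]
    rw [inner_neg_right, EuclideanSpace.inner_single_left, inner_sum] at h1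
    simp only [EuclideanSpace.inner_single_left, conj_trivial, one_mul,
      PiLp.smul_apply, smul_eq_mul] at h1
    have h2 : ∀ i, l i * (a' i) j = (if act i then l i else 0) * A i j := by
      intro i
      by_cases hi : act i
      · rw [if_pos hi, ha'pos i hi]
        congr 1
      · rw [if_neg hi, ha'neg i hi]
        simp
    rw [Finset.sum_congr rfl (fun i _ => h2 i)] at h1
    show c j = -∑ i, (if act i then l i else 0) * A i j
    linarith [h1]
  · have h1 : ⟪-c, v⟫ = ⟪∑ i, l i • a' i, v⟫ := by rw [hlsum]
    rw [inner_neg_left, sum_inner] at h1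
    have h2 : ∀ i, ⟪l i • a' i, v⟫ = (if act i then l i else 0) * b i := by
      intro i
      rw [real_inner_smul_left]
      by_cases hi : act i
      · rw [if_pos hi, ha'pos i hi, haz i v, hi]
      · rw [if_neg hi, ha'neg i hi]
        simp
    rw [Finset.sum_congr rfl (fun i _ => h2 i)] at h1
    show ⟪c, v⟫ = -∑ i, (if act i then l i else 0) * b i
    linarith [h1]
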